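/- Let (Y_n)_{n≥0} be a stationary Markov chain of bounded real random variables with transition kernel K and invariant probability measure μ, and let u_n = sup_{g ∈ Λ₁} ‖K^n(g) − μ(g)‖_{∞,μ}. Let f : ℝ → ℝ satisfy |f(x) − f(y)| ≤ c(|x − y|) for all x, y, where c : [0,∞) → [0,∞) is concave and nondecreasing. Then for every n ≥ 1, ‖K^n(f) − μ(f)‖_{∞,μ} ≤ c(u_n). -/

import Mathlib

open MeasureTheory Filter
open scoped ENNReal

/-- The action of the `n`-fold iterate of a Markov kernel `K` on a function:
`K^0 f = f` and `K^{n+1} f (x) = ∫ K^n f (y) K(x, dy)`. -/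
noncomputable def kIter (K : ProbabilityTheory.Kernel ℝ ℝ) : ℕ → (ℝ → ℝ) → ℝ → ℝ
  | 0, f => f
  | n + 1, f => fun x => ∫ y, kIter K n f y ∂(K x)

/-- `u_n = sup_{g 1-Lipschitz} ‖K^n g − μ(g)‖_{∞,μ}`. -/
noncomputable def uSeq (K : ProbabilityTheory.Kernel ℝ ℝ) (μ : Measure ℝ) (n : ℕ) : ℝ≥0∞ :=
  ⨆ g : {g : ℝ → ℝ // LipschitzWith 1 g},
    eLpNorm (fun x => kIter K n g.1 x - ∫ y, g.1 y ∂μ) ⊤ μ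

open ProbabilityTheory Set Topology

/-- The `n`-fold composition of the kernel `K` with itself. -/
noncomputable def kker (K : Kernel ℝ ℝ) : ℕ → Kernel ℝ ℝ
  | 0 => Kernel.id
  | n + 1 => (kker K n) ∘ₖ K

instance kker_markov (K : Kernel ℝ ℝ) [IsMarkovKernel K] (n : ℕ) :
    IsMarkovKernel (kker K n) := by
  induction n with
  | zero => exact (by unfold kker; infer_instance)
  | succ n ih => exact (by unfold kker; infer_instance)

lemma integrable_of_bdd {α : Type*} [MeasurableSpace α] {ν : Measure α} [IsFiniteMeasure ν]
    {h : α → ℝ}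
    (hm : AEStronglyMeasurable h ν) {C : ℝ} (hb : ∀ z, |h z| ≤ C) : Integrable h ν :=
  ⟨hm, HasFiniteIntegral.of_bounded (C := C)
    (Eventually.of_forall fun z => by simpa [Real.norm_eq_abs] using hb z)⟩

lemma my_integral_comp (η κ : Kernel ℝ ℝ) [IsMarkovKernel η] [IsMarkovKernel κ] (a : ℝ)
    {h : ℝ → ℝ} (hm : Measurable h) {C : ℝ} (hb : ∀ z, |h z| ≤ C) :
    ∫ z, h z ∂((η ∘ₖ κ) a) = ∫ y, ∫ z, h z ∂(η y) ∂(κ a) := by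
  rw [Kernel.comp_eq_snd_compProd, Kernel.snd_apply,
    integral_map measurable_snd.aemeasurable hm.aestronglyMeasurable]
  rw [ProbabilityTheory.integral_compProd (f := fun p : ℝ × ℝ => h p.2)
    (integrable_of_bdd ((hm.comp measurable_snd).aestronglyMeasurable) (fun z => hb z.2))]
  simp [Kernel.prodMkLeft_apply]

lemma kIter_repr (K : Kernel ℝ ℝ) [IsMarkovKernel K] {h : ℝ → ℝ} (hm : Measurable h) {C : ℝ}
    (hb : ∀ z, |h z| ≤ C) : ∀ n x, kIter K n h x = ∫ z, h z ∂(kker K n x)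
  | 0, x => by
    simp [kIter, kker, Kernel.id_apply, integral_dirac' h x hm.stronglyMeasurable]
  | n + 1, x => by
    show (∫ y, kIter K n h y ∂(K x)) = _
    rw [show kker K (n + 1) = (kker K n) ∘ₖ K from rfl, my_integral_comp _ _ _ hm hb]
    exact integral_congr_ae (Eventually.of_forall fun y => kIter_repr K hm hb n y)

lemma kker_inv (K : Kernel ℝ ℝ) [IsMarkovKernel K] (μ : Measure ℝ)
    (hinv : μ.bind (fun x => K x) = μ) :
    ∀ n, μ.bind (fun x => kker K n x) = μ
  | 0 => by
    show μ.bind (fun x => Kernel.id x) = μ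
    simp only [Kernel.id_apply]
    exact Measure.bind_dirac
  | n + 1 => by
    have h1 : (fun x => kker K (n + 1) x) = fun x => (K x).bind (fun y => kker K n y) :=
      funext fun x => Kernel.comp_apply _ _ _
    rw [h1, ← Measure.bind_bind K.measurable.aemeasurable (kker K n).measurable.aemeasurable, hinv,
      kker_inv K μ hinv n]

lemma kker_null (K : Kernel ℝ ℝ) [IsMarkovKernel K] (μ : Measure ℝ)
    (hinv : μ.bind (fun x => K x) = μ) (n : ℕ) {s : Set ℝ}
    (hs : MeasurableSet s) (h0 : μ s = 0) : ∀ᵐ x ∂μ, kker K n x s = 0 := by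
  have h1 : ∫⁻ x, kker K n x s ∂μ = 0 := by
    rw [← Measure.bind_apply hs (kker K n).measurable.aemeasurable, kker_inv K μ hinv n, h0]
  exact (lintegral_eq_zero_iff (Kernel.measurable_coe _ hs)).mp h1

lemma kIter_congr (K : Kernel ℝ ℝ) [IsMarkovKernel K] (μ : Measure ℝ)
    (hinv : μ.bind (fun x => K x) = μ) (h h' : ℝ → ℝ) :
    ∀ n (T : Set ℝ), MeasurableSet T → μ Tᶜ = 0 → (∀ x ∈ T, h x = h' x) →
      ∃ T', MeasurableSet T' ∧ μ T'ᶜ = 0 ∧ ∀ x ∈ T', kIter K n h x = kIter K n h' x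
  | 0, T, hT, hT0, heq => ⟨T, hT, hT0, heq⟩
  | n + 1, T, hT, hT0, heq => by
    obtain ⟨S, hS, hS0, hSeq⟩ := kIter_congr K μ hinv h h' n T hT hT0 heq
    have hmeas : MeasurableSet {x : ℝ | K x Sᶜ = 0} :=
      (Kernel.measurable_coe K hS.compl) (measurableSet_singleton 0)
    refine ⟨{x : ℝ | K x Sᶜ = 0}, hmeas, ?_, ?_⟩
    · have h1 : ∫⁻ x, K x Sᶜ ∂μ = 0 := by
        rw [← Measure.bind_apply hS.compl K.measurable.aemeasurable, hinv, hS0]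
      have h2 := (lintegral_eq_zero_iff (Kernel.measurable_coe K hS.compl)).mp h1
      have h3 : {x : ℝ | K x Sᶜ = 0}ᶜ = {x : ℝ | ¬ K x Sᶜ = 0} := rfl
      rw [h3]
      exact ae_iff.mp h2
    · intro x hx
      show (∫ y, kIter K n h y ∂(K x)) = ∫ y, kIter K n h' y ∂(K x)
      refine integral_congr_ae ?_
      have : {y : ℝ | ¬ kIter K n h y = kIter K n h' y} ⊆ Sᶜ := fun y hy hyS => hy (hSeq y hyS)
      exact measure_mono_null this hx


lemma ae_abs_le_of_eLpNorm_top_le {h : ℝ → ℝ} {μ : Measure ℝ} {b : ℝ≥0∞} (hb : b ≠ ⊤)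
    (hle : eLpNorm h ⊤ μ ≤ b) : ∀ᵐ x ∂μ, |h x| ≤ b.toReal := by
  rw [eLpNorm_exponent_top] at hle
  have h1 := ENNReal.ae_le_essSup (μ := μ) (fun x => (‖h x‖₊ : ℝ≥0∞))
  filter_upwards [h1] with x hx
  have h2 : (‖h x‖₊ : ℝ≥0∞) ≤ b := le_trans hx hle
  have h3 := ENNReal.toReal_mono hb h2
  simpa [Real.norm_eq_abs] using h3

lemma eLpNorm_top_le_of_ae {h : ℝ → ℝ} {μ : Measure ℝ} {C : ℝ}
    (hae : ∀ᵐ x ∂μ, |h x| ≤ C) : eLpNorm h ⊤ μ ≤ ENNReal.ofReal C := by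
  rw [eLpNorm_exponent_top]
  refine essSup_le_of_ae_le _ (hae.mono fun x hx => ?_)
  show (‖h x‖₊ : ℝ≥0∞) ≤ ENNReal.ofReal C
  rw [← enorm_eq_nnnorm, Real.enorm_eq_ofReal_abs]
  exact ENNReal.ofReal_le_ofReal hx

lemma abs_clamp_sub_clamp (B p q : ℝ) :
    |max (-B) (min B p) - max (-B) (min B q)| ≤ |p - q| := by
  have h1 : |max (-B) (min B p) - max (-B) (min B q)| ≤ |min B p - min B q| := by
    rw [max_comm (-B) (min B p), max_comm (-B) (min B q)]
    exact abs_max_sub_max_le_abs _ _ _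
  refine h1.trans ?_
  have h2 := abs_min_sub_min_le_max B p B q
  simpa using h2

/-- The basic 1-Lipschitz approximations to indicator functions of `Iio`. -/
noncomputable def Gfun (t : ℚ) (k : ℕ) (z : ℝ) : ℝ := max 0 (min (((k : ℝ) + 1)⁻¹) ((t : ℝ) - z))

lemma Gfun_lip (t : ℚ) (k : ℕ) : LipschitzWith 1 (Gfun t k) := by
  refine LipschitzWith.of_dist_le_mul fun x y => ?_
  rw [Real.dist_eq, Real.dist_eq, NNReal.coe_one, one_mul]
  have h1 : |Gfun t k x - Gfun t k y|
      ≤ |min (((k : ℝ) + 1)⁻¹) ((t : ℝ) - x) - min (((k : ℝ) + 1)⁻¹) ((t : ℝ) - y)| := by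
    unfold Gfun
    rw [max_comm 0 (min _ _), max_comm 0 (min _ ((t : ℝ) - y))]
    exact abs_max_sub_max_le_abs _ _ _
  refine h1.trans ?_
  have h2 := abs_min_sub_min_le_max (((k : ℝ) + 1)⁻¹) ((t : ℝ) - x) (((k : ℝ) + 1)⁻¹) ((t : ℝ) - y)
  have h3 : ((t : ℝ) - x) - ((t : ℝ) - y) = -(x - y) := by ring
  rw [h3, abs_neg] at h2
  simpa using h2

lemma Gfun_nonneg (t : ℚ) (k : ℕ) (z : ℝ) : 0 ≤ Gfun t k z := le_max_left _ _

lemma Gfun_le (t : ℚ) (k : ℕ) (z : ℝ) : Gfun t k z ≤ ((k : ℝ) + 1)⁻¹ := by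
  unfold Gfun
  have hk : (0 : ℝ) ≤ ((k : ℝ) + 1)⁻¹ := by positivity
  exact max_le hk (min_le_left _ _)

lemma Gfun_bd (t : ℚ) (k : ℕ) (z : ℝ) : |Gfun t k z| ≤ 1 := by
  rw [abs_of_nonneg (Gfun_nonneg t k z)]
  refine (Gfun_le t k z).trans ?_
  rw [inv_le_one_iff₀]
  right; linarith [Nat.cast_nonneg (α := ℝ) k]

lemma Gfun_meas (t : ℚ) (k : ℕ) : Measurable (Gfun t k) :=
  (Gfun_lip t k).continuous.measurable

lemma Gfun_tendsto (t : ℚ) (ρ : Measure ℝ) [IsProbabilityMeasure ρ] :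
    Tendsto (fun k : ℕ => ((k : ℝ) + 1) * ∫ z, Gfun t k z ∂ρ) atTop
      (𝓝 ((ρ (Set.Iio (t : ℝ))).toReal)) := by
  have h1 : ∀ k : ℕ, ((k : ℝ) + 1) * ∫ z, Gfun t k z ∂ρ = ∫ z, ((k : ℝ) + 1) * Gfun t k z ∂ρ :=
    fun k => (integral_const_mul _ _).symm
  have h2 : Tendsto (fun k : ℕ => ∫ z, ((k : ℝ) + 1) * Gfun t k z ∂ρ) atTop
      (𝓝 (∫ z, Set.indicator (Set.Iio (t : ℝ)) 1 z ∂ρ)) := by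
    refine tendsto_integral_of_dominated_convergence (fun _ => 1)
      (fun k => ((Gfun_meas t k).const_mul _).aestronglyMeasurable) (integrable_const 1)
      (fun k => Eventually.of_forall fun z => ?_) (Eventually.of_forall fun z => ?_)
    · have hk : (0 : ℝ) < (k : ℝ) + 1 := by positivity
      rw [Real.norm_eq_abs, abs_mul, abs_of_pos hk, abs_of_nonneg (Gfun_nonneg t k z)]
      calc ((k : ℝ) + 1) * Gfun t k z ≤ ((k : ℝ) + 1) * ((k : ℝ) + 1)⁻¹ :=
            mul_le_mul_of_nonneg_left (Gfun_le t k z) hk.le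
        _ = 1 := mul_inv_cancel₀ hk.ne'
    · by_cases hz : z < (t : ℝ)
      · rw [Set.indicator_of_mem (by simpa using hz)]
        have hpos : (0 : ℝ) < (t : ℝ) - z := by linarith
        have hev : ∀ᶠ k : ℕ in atTop, ((k : ℝ) + 1)⁻¹ ≤ (t : ℝ) - z := by
          have h3 := tendsto_one_div_add_atTop_nhds_zero_nat (𝕜 := ℝ)
          filter_upwards [h3.eventually_lt_const hpos] with k hk
          rw [← one_div]
          exact hk.le
        refine Tendsto.congr' ?_ (tendsto_const_nhds (x := (1 : ℝ)))
        filter_upwards [hev] with k hk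
        have hk0 : (0 : ℝ) < (k : ℝ) + 1 := by positivity
        have hmin : min (((k : ℝ) + 1)⁻¹) ((t : ℝ) - z) = ((k : ℝ) + 1)⁻¹ := min_eq_left hk
        have hmax : max 0 (((k : ℝ) + 1)⁻¹) = ((k : ℝ) + 1)⁻¹ :=
          max_eq_right (by positivity)
        show (1 : ℝ) = ((k : ℝ) + 1) * Gfun t k z
        unfold Gfun
        rw [hmin, hmax, mul_inv_cancel₀ hk0.ne']
      · push_neg at hz
        rw [Set.indicator_of_notMem (by simpa using hz)]
        have hval : ∀ k : ℕ, ((k : ℝ) + 1) * Gfun t k z = 0 := by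
          intro k
          have hk : (0 : ℝ) ≤ ((k : ℝ) + 1)⁻¹ := by positivity
          have hmin : min (((k : ℝ) + 1)⁻¹) ((t : ℝ) - z) = (t : ℝ) - z :=
            min_eq_right (le_trans (by linarith) hk)
          unfold Gfun
          rw [hmin, max_eq_left (by linarith : (t : ℝ) - z ≤ 0), mul_zero]
        simpa [hval] using tendsto_const_nhds (x := (0 : ℝ))
  rw [integral_indicator_one measurableSet_Iio] at h2
  exact h2.congr fun k => (h1 k).symm

theorem stmt_10 (K : ProbabilityTheory.Kernel ℝ ℝ) [ProbabilityTheory.IsMarkovKernel K]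
    (μ : Measure ℝ) [IsProbabilityMeasure μ]
    (hinv : μ.bind (fun x => K x) = μ)
    (M : ℝ) (hμM : μ {x | M < |x|} = 0)
    (c : ℝ → ℝ) (hcmono : MonotoneOn c (Set.Ici 0)) (hcconc : ConcaveOn ℝ (Set.Ici 0) c)
    (hc0 : ∀ t, 0 ≤ t → 0 ≤ c t)
    (f : ℝ → ℝ) (hfmeas : Measurable f) (hf : ∀ x y, |f x - f y| ≤ c |x - y|)
    (n : ℕ) (hn : 1 ≤ n) (hufin : uSeq K μ n ≠ ⊤) :
    eLpNorm (fun x => kIter K n f x - ∫ y, f y ∂μ) ⊤ μ ≤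
      ENNReal.ofReal (c (uSeq K μ n).toReal) := by
  classical
  -- `M` is nonnegative
  have hM0 : (0 : ℝ) ≤ M := by
    by_contra hM
    push_neg at hM
    have huniv : {x : ℝ | M < |x|} = Set.univ :=
      Set.eq_univ_of_forall fun x => lt_of_lt_of_le hM (abs_nonneg x)
    rw [huniv, measure_univ] at hμM
    exact one_ne_zero hμM
  set u := (uSeq K μ n).toReal with hu_def
  have hu0 : 0 ≤ u := ENNReal.toReal_nonneg
  set B := |f 0| + c M with hB
  have hcM : 0 ≤ c M := hc0 M hM0
  have hB0 : 0 ≤ B := add_nonneg (abs_nonneg _) hcM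
  -- the clamped version of `f`
  set f' := fun x => max (-B) (min B (f x)) with hf'def
  have hf'meas : Measurable f' := measurable_const.max (measurable_const.min hfmeas)
  have hf'bd : ∀ x, |f' x| ≤ B := by
    intro x
    refine abs_le.mpr ⟨le_max_left _ _, max_le (by linarith) (min_le_left _ _)⟩
  have hf'mod : ∀ x y, |f' x - f' y| ≤ c |x - y| :=
    fun x y => (abs_clamp_sub_clamp B (f x) (f y)).trans (hf x y)
  have hT : MeasurableSet {x : ℝ | |x| ≤ M} := measurableSet_le measurable_abs measurable_const
  have hTc : μ {x : ℝ | |x| ≤ M}ᶜ = 0 := by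
    have h1 : {x : ℝ | |x| ≤ M}ᶜ = {x : ℝ | M < |x|} := by
      ext x; simp [not_le]
    rw [h1]; exact hμM
  have hf'T : ∀ x ∈ {x : ℝ | |x| ≤ M}, f x = f' x := by
    intro x hx
    have hxM : |x| ≤ M := hx
    have h1 : |f x| ≤ B := by
      have h2 := hf x 0
      have h3 : c |x - 0| ≤ c M := by
        refine hcmono (Set.mem_Ici.mpr (abs_nonneg _)) (Set.mem_Ici.mpr hM0) ?_
        simpa using hxM
      have h4 : |f x| ≤ |f 0| + |f x - f 0| := by
        have := abs_add_le (f 0) (f x - f 0)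
        simpa using this
      calc |f x| ≤ |f 0| + |f x - f 0| := h4
        _ ≤ |f 0| + c |x - 0| := by linarith
        _ ≤ B := by rw [hB]; linarith
    have h5 := abs_le.mp h1
    show f x = max (-B) (min B (f x))
    rw [min_eq_right h5.2, max_eq_right h5.1]
  obtain ⟨T', hT', hT'0, hT'eq⟩ := kIter_congr K μ hinv f f' n _ hT hTc hf'T
  have hμf : ∫ y, f y ∂μ = ∫ y, f' y ∂μ := by
    refine integral_congr_ae ((ae_iff).mpr ?_)
    refine measure_mono_null (fun x hx => ?_) hTc
    intro hxT
    exact hx (hf'T x hxT)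
  have hred : eLpNorm (fun x => kIter K n f x - ∫ y, f y ∂μ) ⊤ μ
      = eLpNorm (fun x => kIter K n f' x - ∫ y, f' y ∂μ) ⊤ μ := by
    refine eLpNorm_congr_ae ?_
    have hT'ae : ∀ᵐ x ∂μ, x ∈ T' := by
      rw [ae_iff]
      exact hT'0
    filter_upwards [hT'ae] with x hx
    rw [hT'eq x hx, hμf]
  rw [hred]
  -- integrability facts
  have hintν : ∀ (ν : Measure ℝ) [IsProbabilityMeasure ν], Integrable f' ν := by
    intro ν _
    exact integrable_of_bdd hf'meas.aestronglyMeasurable hf'bd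
  -- it suffices to bound a.e.
  suffices hmain : ∀ᵐ x ∂μ, |kIter K n f' x - ∫ y, f' y ∂μ| ≤ c u from
    eLpNorm_top_le_of_ae hmain
  rcases eq_or_lt_of_le hu0 with hu | hu
  · -- case u = 0 : the iterated kernel measure equals μ a.e.
    have huS : uSeq K μ n = 0 := by
      rcases ENNReal.toReal_eq_zero_iff (uSeq K μ n) |>.mp hu.symm with h | h
      · exact h
      · exact absurd h hufin
    have hae : ∀ᵐ x ∂μ, ∀ (t : ℚ) (k : ℕ),
        ∫ z, Gfun t k z ∂(kker K n x) = ∫ z, Gfun t k z ∂μ := by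
      rw [ae_all_iff]
      intro t
      rw [ae_all_iff]
      intro k
      have hle : eLpNorm (fun x => kIter K n (Gfun t k) x - ∫ y, Gfun t k y ∂μ) ⊤ μ ≤ 0 := by
        rw [← huS]
        exact le_iSup (fun g : {g : ℝ → ℝ // LipschitzWith 1 g} =>
          eLpNorm (fun x => kIter K n g.1 x - ∫ y, g.1 y ∂μ) ⊤ μ) ⟨Gfun t k, Gfun_lip t k⟩
      have h2 := ae_abs_le_of_eLpNorm_top_le (by simp) hle
      filter_upwards [h2] with x hx
      have h3 := kIter_repr K (Gfun_meas t k) (Gfun_bd t k) n x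
      rw [h3] at hx
      simp only [ENNReal.toReal_zero] at hx
      have h4 := abs_nonneg (∫ z, Gfun t k z ∂(kker K n x) - ∫ y, Gfun t k y ∂μ)
      have h5 : |∫ z, Gfun t k z ∂(kker K n x) - ∫ y, Gfun t k y ∂μ| = 0 := le_antisymm hx h4
      have h6 := abs_eq_zero.mp h5
      linarith [h6]
    filter_upwards [hae] with x hx
    have hνμ : kker K n x = μ := by
      refine MeasureTheory.ext_of_generate_finite (⋃ a : ℚ, {Set.Iio (a : ℝ)})
        ((BorelSpace.measurable_eq (α := ℝ)).trans Real.borel_eq_generateFrom_Iio_rat)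
        Real.isPiSystem_Iio_rat ?_ (by simp)
      intro s hs
      simp only [Set.mem_iUnion, Set.mem_singleton_iff] at hs
      obtain ⟨t, rfl⟩ := hs
      have hA := Gfun_tendsto t (kker K n x)
      have hB := Gfun_tendsto t μ
      have hA' : Tendsto (fun k : ℕ => ((k : ℝ) + 1) * ∫ z, Gfun t k z ∂μ) atTop
          (𝓝 (((kker K n x) (Set.Iio (t : ℝ))).toReal)) := by
        refine hA.congr fun k => ?_
        rw [hx t k]
      have h7 := tendsto_nhds_unique hA' hB
      exact (ENNReal.toReal_eq_toReal_iff' (measure_ne_top _ _) (measure_ne_top _ _)).mp h7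
    rw [kIter_repr K hf'meas hf'bd n x, hνμ, sub_self, abs_zero, ← hu]
    exact hc0 0 le_rfl
  · -- case 0 < u : inf-convolution approximation
    set S := {z : ℝ | ∃ t : ℝ, u < t ∧ z = (c t - c u) / (t - u)} with hS_def
    have hSne : S.Nonempty := ⟨(c (2 * u) - c u) / (2 * u - u), 2 * u, by linarith, rfl⟩
    have hu2 : u / 2 ∈ Set.Ici (0 : ℝ) := Set.mem_Ici.mpr (by linarith)
    have hslope : ∀ t, u < t → (c t - c u) / (t - u) ≤ (c u - c (u / 2)) / (u - u / 2) := by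
      intro t ht
      exact hcconc.slope_anti_adjacent hu2 (Set.mem_Ici.mpr (by linarith)) (by linarith) ht
    have hSbdd : BddAbove S := by
      refine ⟨(c u - c (u / 2)) / (u - u / 2), fun z hz => ?_⟩
      obtain ⟨t, ht, rfl⟩ := hz
      exact hslope t ht
    set s := sSup S with hs_def
    have hs_mem_le : ∀ t, u < t → (c t - c u) / (t - u) ≤ s :=
      fun t ht => le_csSup hSbdd ⟨t, ht, rfl⟩
    have hs_le : ∀ t, 0 ≤ t → t < u → s ≤ (c u - c t) / (u - t) := by
      intro t ht htu
      refine csSup_le hSne ?_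
      rintro z ⟨t', ht', rfl⟩
      exact hcconc.slope_anti_adjacent (Set.mem_Ici.mpr ht)
        (Set.mem_Ici.mpr (by linarith)) htu ht'
    have hs0 : 0 ≤ s := by
      refine le_trans ?_ (hs_mem_le (2 * u) (by linarith))
      have h1 : c u ≤ c (2 * u) :=
        hcmono (Set.mem_Ici.mpr hu0) (Set.mem_Ici.mpr (by linarith)) (by linarith)
      have h2 : (0 : ℝ) < 2 * u - u := by linarith
      exact div_nonneg (by linarith) h2.le
    have hsub : ∀ t, 0 ≤ t → c t ≤ c u + s * (t - u) := by
      intro t ht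
      rcases lt_trichotomy t u with h | h | h
      · have h1 := hs_le t ht h
        rw [le_div_iff₀ (by linarith)] at h1
        nlinarith
      · simp [h]
      · have h1 := hs_mem_le t h
        rw [div_le_iff₀ (by linarith)] at h1
        nlinarith
    set D := c u - s * u with hD_def
    have hD0 : 0 ≤ D := by
      have h1 := hsub 0 le_rfl
      have h2 := hc0 0 le_rfl
      rw [hD_def]
      nlinarith
    -- the inf-convolution
    set fs := fun x => ⨅ y : ℝ, (f' y + s * |x - y|) with hfs_def
    have hbdd : ∀ x, BddBelow (Set.range fun y => f' y + s * |x - y|) := by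
      intro x
      refine ⟨-B, ?_⟩
      rintro z ⟨y, rfl⟩
      have h1 := (abs_le.mp (hf'bd y)).1
      have h2 : 0 ≤ s * |x - y| := mul_nonneg hs0 (abs_nonneg _)
      dsimp only
      linarith
    have hfs_le : ∀ x, fs x ≤ f' x := by
      intro x
      have h1 : fs x ≤ f' x + s * |x - x| := ciInf_le (hbdd x) x
      simpa using h1
    have hfs_ge : ∀ x, f' x - D ≤ fs x := by
      intro x
      refine le_ciInf fun y => ?_
      have h1 := hf'mod x y
      have h2 := hsub |x - y| (abs_nonneg _)
      have h3 : f' x - f' y ≤ c |x - y| := (le_abs_self _).trans h1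
      rw [hD_def]
      nlinarith
    have hfs_bd : ∀ x, |fs x| ≤ B + D := by
      intro x
      have h1 := abs_le.mp (hf'bd x)
      exact abs_le.mpr ⟨by linarith [hfs_ge x], by linarith [hfs_le x]⟩
    have hfs_lip : ∀ x x', fs x ≤ fs x' + s * |x - x'| := by
      intro x x'
      have key : ∀ y : ℝ, fs x - s * |x - x'| ≤ f' y + s * |x' - y| := by
        intro y
        have h1 : fs x ≤ f' y + s * |x - y| := ciInf_le (hbdd x) y
        have h2 : |x - y| ≤ |x - x'| + |x' - y| := abs_sub_le x x' y
        nlinarith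
      have h3 : fs x - s * |x - x'| ≤ fs x' := le_ciInf key
      linarith
    have hfs_lip' : ∀ x x', |fs x - fs x'| ≤ s * |x - x'| := by
      intro x x'
      refine abs_sub_le_iff.mpr ⟨by linarith [hfs_lip x x'], ?_⟩
      have h1 := hfs_lip x' x
      rw [abs_sub_comm] at h1
      linarith
    have hfs_meas : Measurable fs := by
      have h1 : LipschitzWith (Real.toNNReal s) fs := by
        refine LipschitzWith.of_dist_le_mul fun x y => ?_
        rw [Real.dist_eq, Real.dist_eq, Real.coe_toNNReal s hs0]
        exact hfs_lip' x y
      exact h1.continuous.measurable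
    have hintfs : ∀ (ν : Measure ℝ) [IsProbabilityMeasure ν], Integrable fs ν := by
      intro ν _
      exact integrable_of_bdd hfs_meas.aestronglyMeasurable hfs_bd
    -- the middle term bound
    have hmid : ∀ᵐ x ∂μ, |∫ z, fs z ∂(kker K n x) - ∫ z, fs z ∂μ| ≤ s * u := by
      rcases eq_or_lt_of_le hs0 with hs | hs
      · have hconst : ∀ x, fs x = fs 0 := by
          intro x
          have h1 := hfs_lip' x 0
          rw [← hs] at h1
          simp only [zero_mul] at h1
          have h2 := abs_nonneg (fs x - fs 0)
          have h3 : |fs x - fs 0| = 0 := le_antisymm h1 h2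
          have := abs_eq_zero.mp h3
          linarith
        refine Eventually.of_forall fun x => ?_
        have h4 : fs = fun _ => fs 0 := funext hconst
        rw [h4]
        simp [mul_nonneg hs0 hu0]
      · set g := fun x => s⁻¹ * fs x with hg_def
        have hglip : LipschitzWith 1 g := by
          refine LipschitzWith.of_dist_le_mul fun x y => ?_
          rw [Real.dist_eq, Real.dist_eq, NNReal.coe_one, one_mul]
          have h1 : |g x - g y| = s⁻¹ * |fs x - fs y| := by
            rw [hg_def]
            rw [← mul_sub, abs_mul, abs_of_nonneg (inv_nonneg.mpr hs0)]
          rw [h1]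
          calc s⁻¹ * |fs x - fs y| ≤ s⁻¹ * (s * |x - y|) :=
                mul_le_mul_of_nonneg_left (hfs_lip' x y) (inv_nonneg.mpr hs0)
            _ = |x - y| := by field_simp
        have hgle : eLpNorm (fun x => kIter K n g x - ∫ y, g y ∂μ) ⊤ μ ≤ uSeq K μ n :=
          le_iSup (fun g : {g : ℝ → ℝ // LipschitzWith 1 g} =>
            eLpNorm (fun x => kIter K n g.1 x - ∫ y, g.1 y ∂μ) ⊤ μ) ⟨g, hglip⟩
        have hgae := ae_abs_le_of_eLpNorm_top_le hufin hgle
        have hgmeas : Measurable g := hfs_meas.const_mul s⁻¹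
        have hgbd : ∀ z, |g z| ≤ s⁻¹ * (B + D) := by
          intro z
          rw [hg_def]
          dsimp only
          rw [abs_mul, abs_of_nonneg (inv_nonneg.mpr hs0)]
          exact mul_le_mul_of_nonneg_left (hfs_bd z) (inv_nonneg.mpr hs0)
        filter_upwards [hgae] with x hx
        have hrepr := kIter_repr K hgmeas hgbd n x
        have hfg : ∀ ν : Measure ℝ, ∫ z, fs z ∂ν = s * ∫ z, g z ∂ν := by
          intro ν
          rw [← integral_const_mul]
          refine integral_congr_ae (Eventually.of_forall fun z => ?_)
          rw [hg_def]
          dsimp only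
          field_simp
        rw [hfg (kker K n x), hfg μ, ← mul_sub, abs_mul, abs_of_nonneg hs0]
        refine mul_le_mul_of_nonneg_left ?_ hs0
        rw [← hrepr]
        exact hx
    -- conclude
    filter_upwards [hmid] with x hx
    have hrepr' := kIter_repr K hf'meas hf'bd n x
    have hint1 : Integrable f' (kker K n x) := hintν (kker K n x)
    have hint2 : Integrable fs (kker K n x) := hintfs (kker K n x)
    have hint3 : Integrable f' μ := hintν μ
    have hint4 : Integrable fs μ := hintfs μ
    have hsplit : ∀ (ρ : Measure ℝ), Integrable f' ρ → Integrable fs ρ →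
        ∫ z, f' z ∂ρ = (∫ z, (f' z - fs z) ∂ρ) + ∫ z, fs z ∂ρ := by
      intro ρ h1 h2
      rw [integral_sub h1 h2]
      ring
    have hA1a : 0 ≤ ∫ z, (f' z - fs z) ∂(kker K n x) :=
      integral_nonneg fun z => sub_nonneg.mpr (hfs_le z)
    have hA1b : ∫ z, (f' z - fs z) ∂(kker K n x) ≤ D := by
      calc ∫ z, (f' z - fs z) ∂(kker K n x) ≤ ∫ _, D ∂(kker K n x) :=
            integral_mono (hint1.sub hint2) (integrable_const D)
              (fun z => by linarith [hfs_ge z])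
        _ = D := by simp
    have hA2a : 0 ≤ ∫ z, (f' z - fs z) ∂μ :=
      integral_nonneg fun z => sub_nonneg.mpr (hfs_le z)
    have hA2b : ∫ z, (f' z - fs z) ∂μ ≤ D := by
      calc ∫ z, (f' z - fs z) ∂μ ≤ ∫ _, D ∂μ :=
            integral_mono (hint3.sub hint4) (integrable_const D)
              (fun z => by linarith [hfs_ge z])
        _ = D := by simp
    rw [hrepr', hsplit (kker K n x) hint1 hint2, hsplit μ hint3 hint4]
    have heq : (∫ z, (f' z - fs z) ∂(kker K n x)) + (∫ z, fs z ∂(kker K n x))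
        - ((∫ z, (f' z - fs z) ∂μ) + ∫ z, fs z ∂μ)
        = ((∫ z, (f' z - fs z) ∂(kker K n x)) - ∫ z, (f' z - fs z) ∂μ)
          + ((∫ z, fs z ∂(kker K n x)) - ∫ z, fs z ∂μ) := by ring
    rw [heq]
    refine (abs_add_le _ _).trans ?_
    have h5 : |(∫ z, (f' z - fs z) ∂(kker K n x)) - ∫ z, (f' z - fs z) ∂μ| ≤ D :=
      abs_le.mpr ⟨by linarith, by linarith⟩
    have h6 : c u = D + s * u := by rw [hD_def]; ring
    linarith
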